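/- Let k ≥ 0 and r = k + 1. Suppose a_2 is continuously differentiable with a_2 > 0 on [a,b], a_0 is continuous with a_0 ≥ 0, and u is twice continuously differentiable on [a,b] and solves −(a_2 u′)′ + a_0 u = f on (a,b) with u(a) = 0 and u′(b) = 0. Then for every partition a = x_1 < … < x_N = b, u satisfies the identity (π_h(a_2 u′), d_{w,r}v)_h + (a_0 u, v^0)_{L²(a,b)} = (f, v^0)_{L²(a,b)} for all v ∈ S_h. -/

import Mathlib

open MeasureTheory Set

noncomputable section

/-- `p` is the discrete weak derivative of order `r` of the weak function
`(v0, vl, vr)` on the interval `(c, d)`: it is a polynomial of degree at most `r`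
satisfying `∫ p q = -∫ v0 q' + vr q(d) - vl q(c)` for all polynomials `q` of
degree at most `r`. -/
def IsWeakDeriv (r : ℕ) (c d : ℝ) (v0 : ℝ → ℝ) (vl vr : ℝ) (p : Polynomial ℝ) : Prop :=
  p.degree ≤ (r : WithBot ℕ) ∧ ∀ q : Polynomial ℝ, q.degree ≤ (r : WithBot ℕ) →
    (∫ t in c..d, p.eval t * q.eval t) =
      -(∫ t in c..d, v0 t * q.derivative.eval t) + vr * q.eval d - vl * q.eval c

/-- `p` is the L²(c,d)-orthogonal projection of `g` onto polynomials of degree at most `l`. -/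
def IsL2Proj (l : ℕ) (c d : ℝ) (g : ℝ → ℝ) (p : Polynomial ℝ) : Prop :=
  p.degree ≤ (l : WithBot ℕ) ∧ ∀ q : Polynomial ℝ, q.degree ≤ (l : WithBot ℕ) →
    (∫ t in c..d, (g t - p.eval t) * q.eval t) = 0

/-- `x 0 = a < x 1 < ⋯ < x (N-1) = b` is a partition of `(a,b)`. -/
def IsPartition (N : ℕ) (a b : ℝ) (x : ℕ → ℝ) : Prop :=
  2 ≤ N ∧ x 0 = a ∧ x (N - 1) = b ∧ ∀ i < N - 1, x i < x (i + 1)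

/-- Membership in the weak finite element space `S_h`: on each of the `N - 1` elements the
interior component is a polynomial of degree at most `k`, the nodal values are single
valued, and the nodal value at the left endpoint vanishes. -/
def MemSh (k N : ℕ) (v0 : ℕ → Polynomial ℝ) (vn : ℕ → ℝ) : Prop :=
  (∀ i < N - 1, (v0 i).degree ≤ (k : WithBot ℕ)) ∧ vn 0 = 0

/-- `D i` is the discrete weak derivative of order `r` of the weak finite element function
`(v0, vn)` on the `i`-th element `(x i, x (i+1))`. -/
def IsWeakDerivFam (r N : ℕ) (x : ℕ → ℝ) (v0 : ℕ → Polynomial ℝ) (vn : ℕ → ℝ)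
    (D : ℕ → Polynomial ℝ) : Prop :=
  ∀ i < N - 1, IsWeakDeriv r (x i) (x (i + 1)) (fun t => (v0 i).eval t) (vn i) (vn (i + 1)) (D i)

/-- `(u0, un)` with discrete weak derivatives `Du` is a weak finite element solution:
it belongs to `S_h` and satisfies
`(a2 d_w u_h, d_w v)_h + (a0 u_h⁰, v⁰) = (f, v⁰)` for all `v ∈ S_h`. -/
def IsWFESol (k r N : ℕ) (x : ℕ → ℝ) (a2 a0 f : ℝ → ℝ)
    (u0 : ℕ → Polynomial ℝ) (un : ℕ → ℝ) (Du : ℕ → Polynomial ℝ) : Prop :=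
  MemSh k N u0 un ∧ IsWeakDerivFam r N x u0 un Du ∧
  ∀ (v0 : ℕ → Polynomial ℝ) (vn : ℕ → ℝ) (Dv : ℕ → Polynomial ℝ),
    MemSh k N v0 vn → IsWeakDerivFam r N x v0 vn Dv →
    ((∑ i ∈ Finset.range (N - 1), ∫ t in x i..x (i + 1), a2 t * (Du i).eval t * (Dv i).eval t)
      + ∑ i ∈ Finset.range (N - 1), ∫ t in x i..x (i + 1), a0 t * (u0 i).eval t * (v0 i).eval t)
      = ∑ i ∈ Finset.range (N - 1), ∫ t in x i..x (i + 1), f t * (v0 i).eval t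

/-- The Sobolev norm `‖u‖_m = (∑_{j=0}^m ∫_a^b |u^{(j)}|² dx)^{1/2}` of an `m`-times
continuously differentiable function on `[a,b]`. -/
def sobNorm (m : ℕ) (a b : ℝ) (u : ℝ → ℝ) : ℝ :=
  Real.sqrt (∑ j ∈ Finset.range (m + 1),
    ∫ t in a..b, (iteratedDerivWithin j u (Set.Icc a b) t) ^ 2)

/-- `u` solves the two-point boundary value problem
`-(a2 u')' + a0 u = f` on `(a,b)`, `u(a) = 0`, `u'(b) = 0`. -/
def SolvesBVP (a b : ℝ) (a2 a0 f u : ℝ → ℝ) : Prop :=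
  (∀ x ∈ Set.Ioo a b,
    -(derivWithin (fun t => a2 t * derivWithin u (Set.Icc a b) t) (Set.Icc a b) x)
      + a0 x * u x = f x) ∧
  u a = 0 ∧ derivWithin u (Set.Icc a b) b = 0

/-- Lemma 4.2. Let `k ≥ 0`, `r = k + 1`. Suppose `a2 ∈ C¹([a,b])` is
positive, `a0` is continuous and nonnegative, and `u ∈ C²([a,b])` solves
`-(a2 u')' + a0 u = f` on `(a,b)` with `u(a) = 0`, `u'(b) = 0`. Then for every partition,
with `ph i` the pieces of `π_h (a2 u')` (degree ≤ `k+1`, matching `a2 u'` at the left node,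
and with `(π_h (a2 u'))' = P_h^k ((a2 u')')` elementwise),
`(π_h(a2 u'), d_{w,r} v)_h + (a0 u, v⁰) = (f, v⁰)` for all `v ∈ S_h`. -/
theorem exact_solution_identity (k : ℕ) (a b : ℝ) (hab : a < b) (a2 a0 f u : ℝ → ℝ)
    (ha2 : ContDiffOn ℝ 1 a2 (Set.Icc a b)) (ha2pos : ∀ t ∈ Set.Icc a b, 0 < a2 t)
    (ha0c : ContinuousOn a0 (Set.Icc a b)) (ha0nn : ∀ t ∈ Set.Icc a b, 0 ≤ a0 t)
    (hu : ContDiffOn ℝ 2 u (Set.Icc a b))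
    (hbvp : SolvesBVP a b a2 a0 f u)
    (N : ℕ) (x : ℕ → ℝ) (hpart : IsPartition N a b x)
    (ph : ℕ → Polynomial ℝ)
    (hph : ∀ i < N - 1, (ph i).degree ≤ ((k + 1 : ℕ) : WithBot ℕ) ∧
      (ph i).eval (x i) = a2 (x i) * derivWithin u (Set.Icc a b) (x i) ∧
      ∀ q : Polynomial ℝ, q.degree ≤ (k : WithBot ℕ) →
        (∫ t in x i..x (i + 1), (ph i).derivative.eval t * q.eval t)
          = ∫ t in x i..x (i + 1),
              derivWithin (fun s => a2 s * derivWithin u (Set.Icc a b) s) (Set.Icc a b) t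
                * q.eval t)
    (v0 : ℕ → Polynomial ℝ) (vn : ℕ → ℝ) (Dv : ℕ → Polynomial ℝ)
    (hv : MemSh k N v0 vn) (hDv : IsWeakDerivFam (k + 1) N x v0 vn Dv) :
    ((∑ i ∈ Finset.range (N - 1), ∫ t in x i..x (i + 1), (ph i).eval t * (Dv i).eval t)
      + ∑ i ∈ Finset.range (N - 1), ∫ t in x i..x (i + 1), a0 t * u t * (v0 i).eval t)
      = ∑ i ∈ Finset.range (N - 1), ∫ t in x i..x (i + 1), f t * (v0 i).eval t := by

  obtain ⟨hN, hxa, hxb, hstep⟩ := hpart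
  have hUD : UniqueDiffOn ℝ (Set.Icc a b) := uniqueDiffOn_Icc hab
  set g : ℝ → ℝ := fun t => a2 t * derivWithin u (Set.Icc a b) t with hgdef
  set g' : ℝ → ℝ := derivWithin g (Set.Icc a b) with hg'def
  have hu1 : ContDiffOn ℝ 1 (derivWithin u (Set.Icc a b)) (Set.Icc a b) :=
    hu.derivWithin hUD (by norm_num)
  have hg : ContDiffOn ℝ 1 g (Set.Icc a b) := ha2.mul hu1
  have hgc : ContinuousOn g (Set.Icc a b) := hg.continuousOn
  have hg'c : ContinuousOn g' (Set.Icc a b) :=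
    hg.continuousOn_derivWithin hUD le_rfl
  -- monotonicity of the partition nodes
  have hmono : ∀ j, j ≤ N - 1 → ∀ i, i ≤ j → x i ≤ x j := by
    intro j
    induction j with
    | zero => intro _ i hi; simp [Nat.le_zero.mp hi]
    | succ j ih =>
      intro hj i hi
      rcases Nat.lt_succ_iff_lt_or_eq.mp (Nat.lt_succ_of_le hi) with h | h
      · exact le_trans (ih (by omega) i (by omega)) (le_of_lt (hstep j (by omega)))
      · exact le_of_eq (by rw [h])
  -- per element identity
  have key : ∀ i ∈ Finset.range (N - 1),
      (∫ t in x i..x (i + 1), (ph i).eval t * (Dv i).eval t)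
        + (∫ t in x i..x (i + 1), a0 t * u t * (v0 i).eval t)
        - (∫ t in x i..x (i + 1), f t * (v0 i).eval t)
      = vn (i + 1) * g (x (i + 1)) - vn i * g (x i) := by
    intro i hi
    rw [Finset.mem_range] at hi
    have hii : x i < x (i + 1) := hstep i hi
    have hia : a ≤ x i := by rw [← hxa]; exact hmono i (by omega) 0 (by omega)
    have hib : x (i + 1) ≤ b := by rw [← hxb]; exact hmono (N - 1) le_rfl (i + 1) (by omega)
    have hsubIcc : Set.Icc (x i) (x (i + 1)) ⊆ Set.Icc a b := Set.Icc_subset_Icc hia hib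
    have hsubIoo : Set.Ioo (x i) (x (i + 1)) ⊆ Set.Ioo a b := Set.Ioo_subset_Ioo hia hib
    -- weak derivative identity with q = ph i
    have h1 : (∫ t in x i..x (i + 1), (Dv i).eval t * (ph i).eval t)
        = -(∫ t in x i..x (i + 1), (v0 i).eval t * (ph i).derivative.eval t)
          + vn (i + 1) * (ph i).eval (x (i + 1)) - vn i * (ph i).eval (x i) :=
      (hDv i hi).2 (ph i) (hph i hi).1
    -- projection identity with q = v0 i
    have h2 : (∫ t in x i..x (i + 1), (ph i).derivative.eval t * (v0 i).eval t)
        = ∫ t in x i..x (i + 1), g' t * (v0 i).eval t :=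
      (hph i hi).2.2 (v0 i) (hv.1 i hi)
    -- FTC for the polynomial ph i
    have hftc_ph : (∫ t in x i..x (i + 1), (ph i).derivative.eval t)
        = (ph i).eval (x (i + 1)) - (ph i).eval (x i) := by
      exact intervalIntegral.integral_eq_sub_of_hasDerivAt
        (fun t _ => (ph i).hasDerivAt t)
        (((ph i).derivative.continuous_aeval).intervalIntegrable _ _)
    -- FTC for g
    have hftc_g : (∫ t in x i..x (i + 1), g' t) = g (x (i + 1)) - g (x i) := by
      apply intervalIntegral.integral_eq_sub_of_hasDeriv_right_of_le hii.le
        (hgc.mono hsubIcc)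
      · intro t ht
        have htab : t ∈ Set.Ioo a b := hsubIoo ht
        have hmem : Set.Icc a b ∈ nhds t := Icc_mem_nhds htab.1 htab.2
        have hdw : HasDerivWithinAt g (g' t) (Set.Icc a b) t :=
          ((hg.differentiableOn one_ne_zero) t (Set.Ioo_subset_Icc_self htab)).hasDerivWithinAt
        exact (hdw.hasDerivAt hmem).hasDerivWithinAt
      · exact (hg'c.mono hsubIcc).intervalIntegrable_of_Icc hii.le
    -- ph matches g at the right endpoint
    have hq1 : (∫ t in x i..x (i + 1), (ph i).derivative.eval t)
        = ∫ t in x i..x (i + 1), g' t := by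
      have := (hph i hi).2.2 1 (by simpa using (zero_le (k : WithBot ℕ)))
      simpa using this
    have hleft : (ph i).eval (x i) = g (x i) := (hph i hi).2.1
    have hright : (ph i).eval (x (i + 1)) = g (x (i + 1)) := by
      have := hq1
      rw [hftc_ph, hftc_g] at this
      linarith
    -- rewrite ∫ f v0 using the ODE
    have hcongr : (∫ t in x i..x (i + 1), f t * (v0 i).eval t)
        = ∫ t in x i..x (i + 1), (a0 t * u t - g' t) * (v0 i).eval t := by
      apply intervalIntegral.integral_congr_ae
      have hsing : ∀ᵐ t : ℝ, t ∉ ({x (i + 1)} : Set ℝ) :=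
        (Set.countable_singleton _).ae_notMem _
      filter_upwards [hsing] with t hne ht
      rw [Set.uIoc_of_le hii.le] at ht
      have htIoo : t ∈ Set.Ioo (x i) (x (i + 1)) :=
        ⟨ht.1, lt_of_le_of_ne ht.2 (by simpa using hne)⟩
      have htab : t ∈ Set.Ioo a b := hsubIoo htIoo
      have := hbvp.1 t htab
      have : f t = a0 t * u t - g' t := by
        simp only [hg'def, hgdef]; linarith
      rw [this]
    -- integrability
    have hInt1 : IntervalIntegrable (fun t => a0 t * u t * (v0 i).eval t)
        volume (x i) (x (i + 1)) := by
      apply ContinuousOn.intervalIntegrable_of_Icc hii.le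
      exact ((ha0c.mono hsubIcc).mul (hu.continuousOn.mono hsubIcc)).mul
        (Polynomial.continuous_aeval _).continuousOn
    have hInt2 : IntervalIntegrable (fun t => g' t * (v0 i).eval t)
        volume (x i) (x (i + 1)) := by
      apply ContinuousOn.intervalIntegrable_of_Icc hii.le
      exact (hg'c.mono hsubIcc).mul (Polynomial.continuous_aeval _).continuousOn
    have hsplit : (∫ t in x i..x (i + 1), (a0 t * u t - g' t) * (v0 i).eval t)
        = (∫ t in x i..x (i + 1), a0 t * u t * (v0 i).eval t)
          - ∫ t in x i..x (i + 1), g' t * (v0 i).eval t := by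
      rw [← intervalIntegral.integral_sub hInt1 hInt2]
      apply intervalIntegral.integral_congr
      intro t _; ring
    -- commuting products inside integrals
    have e1 : (∫ t in x i..x (i + 1), (ph i).eval t * (Dv i).eval t)
        = ∫ t in x i..x (i + 1), (Dv i).eval t * (ph i).eval t := by
      apply intervalIntegral.integral_congr; intro t _; ring
    have e2 : (∫ t in x i..x (i + 1), (v0 i).eval t * (ph i).derivative.eval t)
        = ∫ t in x i..x (i + 1), (ph i).derivative.eval t * (v0 i).eval t := by
      apply intervalIntegral.integral_congr; intro t _; ring
    rw [e1, h1, e2, h2, hcongr, hsplit, hleft, hright]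
    ring
  -- sum up
  have hsum := Finset.sum_congr rfl key
  rw [Finset.sum_range_sub (f := fun i => vn i * g (x i))] at hsum
  have hvn0 : vn 0 = 0 := hv.2
  have hgb : g (x (N - 1)) = 0 := by
    rw [hxb]; simp [hgdef, hbvp.2.2]
  rw [hvn0, hgb] at hsum
  simp only [mul_zero, zero_mul, sub_zero] at hsum
  rw [Finset.sum_sub_distrib, Finset.sum_add_distrib] at hsum
  linarith
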